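/- Let n ≥ 1 and d ≥ 3 be integers, let S : (Fin d → Fin n) → ℂ be symmetric with contraction F and map H as in the context, and let ‖S‖_σ = sSup{ |Σ_{i : Fin d → Fin n} S(i) ∏_{k} x^{(k)}(i(k))| : x^{(1)},…,x^{(d)} ∈ ℂⁿ with ‖x^{(k)}‖ = 1 for all k } be the spectral norm of S. If y ∈ ℂⁿ satisfies H(y) = y and y ≠ 0, then ‖y‖^{−(d−2)} ≤ ‖S‖_σ, i.e. 1 ≤ ‖S‖_σ · ‖y‖^{d−2}. -/

import Mathlib

private lemma aux_bound (n d : ℕ) (S : (Fin d → Fin n) → ℂ) (M : ℝ)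
    (hM : M = sSup {r : ℝ | ∃ x : Fin d → Fin n → ℂ,
        (∀ k, (∑ l, ‖x k l‖ ^ 2) = 1) ∧
        r = ‖(∑ i : Fin d → Fin n, S i * ∏ k, x k (i k))‖})
    (x : Fin d → Fin n → ℂ) :
    ‖(∑ i : Fin d → Fin n, S i * ∏ k, x k (i k))‖
      ≤ M * ∏ k, Real.sqrt (∑ l, ‖x k l‖ ^ 2) := by
  have hM0 : 0 ≤ M := by
    rw [hM]
    apply Real.sSup_nonneg
    rintro r ⟨x, -, rfl⟩
    positivity
  have hbdd : BddAbove {r : ℝ | ∃ x : Fin d → Fin n → ℂ,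
        (∀ k, (∑ l, ‖x k l‖ ^ 2) = 1) ∧
        r = ‖(∑ i : Fin d → Fin n, S i * ∏ k, x k (i k))‖} := by
    refine ⟨∑ i : Fin d → Fin n, ‖S i‖, ?_⟩
    rintro r ⟨x, hx, rfl⟩
    calc ‖(∑ i : Fin d → Fin n, S i * ∏ k, x k (i k))‖
        ≤ ∑ i : Fin d → Fin n, ‖(S i * ∏ k, x k (i k))‖ :=
          norm_sum_le _ _
      _ ≤ ∑ i : Fin d → Fin n, ‖S i‖ := by
          apply Finset.sum_le_sum
          intro i _
          rw [norm_mul]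
          have h1 : ‖(∏ k, x k (i k))‖ ≤ 1 := by
            rw [norm_prod]
            apply Finset.prod_le_one
            · intro k _; positivity
            · intro k _
              have h2 : ‖x k (i k)‖ ^ 2 ≤ 1 := by
                rw [← hx k]
                exact Finset.single_le_sum (f := fun l => ‖x k l‖ ^ 2)
                  (fun l _ => by positivity) (Finset.mem_univ (i k))
              nlinarith [norm_nonneg (x k (i k))]
          calc ‖S i‖ * ‖(∏ k, x k (i k))‖
              ≤ ‖S i‖ * 1 :=
                mul_le_mul_of_nonneg_left h1 (norm_nonneg _)
            _ = _ := mul_one _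
  by_cases hx0 : ∀ k, x k ≠ 0
  · set Q : Fin d → ℝ := fun k => ∑ l, ‖x k l‖ ^ 2 with hQ
    have hQpos : ∀ k, 0 < Q k := by
      intro k
      obtain ⟨l, hl⟩ := Function.ne_iff.mp (hx0 k)
      have hl' : x k l ≠ 0 := by simpa using hl
      exact Finset.sum_pos' (fun l _ => by positivity)
        ⟨l, Finset.mem_univ _, pow_pos (norm_pos_iff.mpr hl') 2⟩
    set Nk : Fin d → ℝ := fun k => Real.sqrt (Q k) with hNk
    have hNpos : ∀ k, 0 < Nk k := fun k => Real.sqrt_pos.mpr (hQpos k)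
    set u : Fin d → Fin n → ℂ := fun k l => x k l / (Nk k : ℂ) with hu
    have hunit : ∀ k, (∑ l, ‖u k l‖ ^ 2) = 1 := by
      intro k
      have : ∀ l, ‖u k l‖ ^ 2 = ‖x k l‖ ^ 2 / Q k := by
        intro l
        rw [hu]
        simp only [norm_div, div_pow, Complex.norm_real, Real.norm_eq_abs,
          abs_of_nonneg (hNpos k).le]
        rw [hNk, Real.sq_sqrt (hQpos k).le]
      rw [Finset.sum_congr rfl fun l _ => this l, ← Finset.sum_div]
      exact div_self (hQpos k).ne'
    have hTsplit : (∑ i : Fin d → Fin n, S i * ∏ k, x k (i k))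
        = (∏ k, (Nk k : ℂ)) * ∑ i : Fin d → Fin n, S i * ∏ k, u k (i k) := by
      rw [Finset.mul_sum]
      refine Finset.sum_congr rfl fun i _ => ?_
      rw [mul_left_comm, ← Finset.prod_mul_distrib]
      congr 1
      refine Finset.prod_congr rfl fun k _ => ?_
      rw [hu]
      have hne : ((Nk k : ℝ) : ℂ) ≠ 0 := by
        simp [Complex.ofReal_ne_zero, (hNpos k).ne']
      field_simp
    have hmem : ‖(∑ i : Fin d → Fin n, S i * ∏ k, u k (i k))‖ ≤ M := by
      rw [hM]
      exact le_csSup hbdd ⟨u, hunit, rfl⟩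
    calc ‖(∑ i : Fin d → Fin n, S i * ∏ k, x k (i k))‖
        = (∏ k, Nk k) * ‖(∑ i : Fin d → Fin n, S i * ∏ k, u k (i k))‖ := by
          rw [hTsplit, norm_mul, norm_prod]
          congr 1
          exact Finset.prod_congr rfl fun k _ => by
            rw [Complex.norm_real, Real.norm_eq_abs, abs_of_nonneg (hNpos k).le]
      _ ≤ (∏ k, Nk k) * M :=
          mul_le_mul_of_nonneg_left hmem (Finset.prod_nonneg fun k _ => (hNpos k).le)
      _ = M * ∏ k, Real.sqrt (∑ l, ‖x k l‖ ^ 2) := by rw [mul_comm]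
  · push_neg at hx0
    obtain ⟨k0, hk0⟩ := hx0
    have hzero : (∑ i : Fin d → Fin n, S i * ∏ k, x k (i k)) = 0 := by
      apply Finset.sum_eq_zero
      intro i _
      have : (∏ k, x k (i k)) = 0 :=
        Finset.prod_eq_zero (Finset.mem_univ k0) (by rw [hk0]; rfl)
      rw [this, mul_zero]
    rw [hzero, norm_zero]
    exact mul_nonneg hM0 (Finset.prod_nonneg fun k _ => Real.sqrt_nonneg _)

private lemma aux_cast {d : ℕ} (hc : d - 1 + 1 = d) (k : Fin (d - 1 + 1)) :
    Fin.cast hc.symm (finCongr hc k) = k := by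
  apply Fin.ext
  simp

private lemma aux_pair (n d : ℕ) (hd : 3 ≤ d) (S : (Fin d → Fin n) → ℂ)
    (F : Fin n → (Fin n → ℂ) → ℂ)
    (hF : ∀ l y, F l y = ∑ i : Fin (d - 1) → Fin n,
        S (fun k => (Fin.cons l i : Fin (d - 1 + 1) → Fin n)
              (Fin.cast (by omega : d - 1 + 1 = d).symm k)) *
          ∏ k, y (i k))
    (v w : Fin n → ℂ) :
    ∑ l, v l * F l w = ∑ i : Fin d → Fin n, S i *
      ∏ k, (Fin.cons v (fun _ => w) : Fin (d - 1 + 1) → Fin n → ℂ)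
        (Fin.cast (by omega : d - 1 + 1 = d).symm k) (i k) := by
  have hc : d - 1 + 1 = d := by omega
  set e : (Fin n × (Fin (d - 1) → Fin n)) ≃ (Fin d → Fin n) :=
    (Fin.consEquiv fun _ => Fin n).trans
      ((finCongr hc).arrowCongr (Equiv.refl (Fin n))) with he
  have hekey : ∀ (l : Fin n) (j : Fin (d - 1) → Fin n) (k : Fin d),
      e (l, j) k = (Fin.cons l j : Fin (d - 1 + 1) → Fin n) (Fin.cast hc.symm k) := by
    intro l j k
    simp [he, Fin.consEquiv, Equiv.arrowCongr, finCongr]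
  rw [← Equiv.sum_comp e (fun i => S i *
      ∏ k, (Fin.cons v (fun _ => w) : Fin (d - 1 + 1) → Fin n → ℂ)
        (Fin.cast (by omega : d - 1 + 1 = d).symm k) (i k)), Fintype.sum_prod_type]
  refine Finset.sum_congr rfl fun l _ => ?_
  rw [hF, Finset.mul_sum]
  refine Finset.sum_congr rfl fun j _ => ?_
  have hS : S (e (l, j)) =
      S (fun k => (Fin.cons l j : Fin (d - 1 + 1) → Fin n)
        (Fin.cast hc.symm k)) := by
    exact congrArg S (funext fun k => hekey l j k)
  have hprod : (∏ k : Fin d,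
      (Fin.cons v (fun _ => w) : Fin (d - 1 + 1) → Fin n → ℂ)
        (Fin.cast hc.symm k) (e (l, j) k))
      = v l * ∏ k : Fin (d - 1), w (j k) := by
    rw [← Fintype.prod_equiv (finCongr hc)
      (fun k' => (Fin.cons v (fun _ => w) : Fin (d - 1 + 1) → Fin n → ℂ) k'
        ((Fin.cons l j : Fin (d - 1 + 1) → Fin n) k'))
      (fun k => (Fin.cons v (fun _ => w) : Fin (d - 1 + 1) → Fin n → ℂ)
        (Fin.cast hc.symm k) (e (l, j) k))
      (fun k' => by simp only [hekey, aux_cast hc])]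
    rw [Fin.prod_univ_succ]
    simp
  rw [hS, hprod]
  ring

private lemma aux_prod (n d : ℕ) (hd : 3 ≤ d) (g : (Fin n → ℂ) → ℝ) (v w : Fin n → ℂ) :
    (∏ k : Fin d, g ((Fin.cons v (fun _ => w) : Fin (d - 1 + 1) → Fin n → ℂ)
        (Fin.cast (by omega : d - 1 + 1 = d).symm k))) = g v * g w ^ (d - 1) := by
  have hc : d - 1 + 1 = d := by omega
  rw [← Fintype.prod_equiv (finCongr hc)
    (fun k' => g ((Fin.cons v (fun _ => w) : Fin (d - 1 + 1) → Fin n → ℂ) k'))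
    (fun k => g ((Fin.cons v (fun _ => w) : Fin (d - 1 + 1) → Fin n → ℂ)
        (Fin.cast hc.symm k)))
    (fun k' => by simp only [aux_cast hc])]
  rw [Fin.prod_univ_succ]
  simp

set_option maxHeartbeats 1000000 in
/-- If y ≠ 0 is a fixed point of H, then ‖y‖^{−(d−2)} ≤ ‖S‖_σ,
i.e. 1 ≤ ‖S‖_σ · ‖y‖^{d−2}. -/
theorem stmt_7 (n d : ℕ) (hn : 1 ≤ n) (hd : 3 ≤ d)
    (S : (Fin d → Fin n) → ℂ)
    (hS : ∀ (σ : Equiv.Perm (Fin d)) (i : Fin d → Fin n), S (i ∘ σ) = S i)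
    (F : Fin n → (Fin n → ℂ) → ℂ)
    (hF : ∀ l y, F l y = ∑ i : Fin (d - 1) → Fin n,
        S (fun k => (Fin.cons l i : Fin (d - 1 + 1) → Fin n)
              (Fin.cast (by omega : d - 1 + 1 = d).symm k)) *
          ∏ k, y (i k))
    (H : (Fin n → ℂ) → (Fin n → ℂ))
    (hH : ∀ y l, H y l = (starRingEnd ℂ) (F l (fun m => (starRingEnd ℂ) (F m y))))
    (M : ℝ)
    (hM : M = sSup {r : ℝ | ∃ x : Fin d → Fin n → ℂ,
        (∀ k, (∑ l, ‖x k l‖ ^ 2) = 1) ∧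
        r = ‖(∑ i : Fin d → Fin n, S i * ∏ k, x k (i k))‖})
    (y : Fin n → ℂ) (hy : H y = y) (hy0 : y ≠ 0) :
    1 ≤ M * (Real.sqrt (∑ l, ‖y l‖ ^ 2)) ^ (d - 2) := by
  have hc : d - 1 + 1 = d := by omega
  have hM0 : 0 ≤ M := by
    rw [hM]
    apply Real.sSup_nonneg
    rintro r ⟨x, -, rfl⟩
    positivity
  set z : Fin n → ℂ := fun m => (starRingEnd ℂ) (F m y) with hz
  have hyz : ∀ l, (starRingEnd ℂ) (y l) = F l z := by
    intro l
    have h1 : H y l = y l := by rw [hy]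
    rw [hH] at h1
    rw [← hz] at h1
    rw [← h1, Complex.conj_conj]
  have hzy : ∀ m, (starRingEnd ℂ) (z m) = F m y := by
    intro m
    rw [hz]
    exact Complex.conj_conj _
  -- the key inequality, applied twice
  have step : ∀ v w : Fin n → ℂ, (∀ l, (starRingEnd ℂ) (v l) = F l w) →
      (∑ l, ‖v l‖ ^ 2) ≤
        M * (Real.sqrt (∑ l, ‖v l‖ ^ 2) *
          Real.sqrt (∑ l, ‖w l‖ ^ 2) ^ (d - 1)) := by
    intro v w hvw
    set X : Fin d → Fin n → ℂ := fun k =>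
      (Fin.cons v (fun _ => w) : Fin (d - 1 + 1) → Fin n → ℂ)
        (Fin.cast hc.symm k) with hX
    have h1 : ((∑ l, ‖v l‖ ^ 2 : ℝ) : ℂ) = ∑ l, v l * F l w := by
      rw [Complex.ofReal_sum]
      refine Finset.sum_congr rfl fun l _ => ?_
      rw [← hvw l, Complex.mul_conj, Complex.normSq_eq_norm_sq]
    have h2 := aux_bound n d S M hM X
    have h3 := aux_pair n d hd S F hF v w
    have h4 := aux_prod n d hd
      (fun v' => Real.sqrt (∑ l, ‖v' l‖ ^ 2)) v w
    calc (∑ l, ‖v l‖ ^ 2)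
        = ‖((∑ l, ‖v l‖ ^ 2 : ℝ) : ℂ)‖ := by
          rw [Complex.norm_real, Real.norm_eq_abs, abs_of_nonneg (by positivity)]
      _ = ‖(∑ i : Fin d → Fin n, S i * ∏ k, X k (i k))‖ := by
          rw [h1, h3]
      _ ≤ M * ∏ k, Real.sqrt (∑ l, ‖X k l‖ ^ 2) := h2
      _ = M * (Real.sqrt (∑ l, ‖v l‖ ^ 2) *
          Real.sqrt (∑ l, ‖w l‖ ^ 2) ^ (d - 1)) := by
          rw [← h4]
  have h1 := step y z hyz
  have h2 := step z y hzy
  have hQynn : (0:ℝ) ≤ ∑ l, ‖y l‖ ^ 2 := by positivity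
  have hQznn : (0:ℝ) ≤ ∑ l, ‖z l‖ ^ 2 := by positivity
  have h1' : Real.sqrt (∑ l, ‖y l‖ ^ 2) ^ 2 ≤
      M * (Real.sqrt (∑ l, ‖y l‖ ^ 2) *
        Real.sqrt (∑ l, ‖z l‖ ^ 2) ^ (d - 1)) := by
    rw [Real.sq_sqrt hQynn]; exact h1
  have h2' : Real.sqrt (∑ l, ‖z l‖ ^ 2) ^ 2 ≤
      M * (Real.sqrt (∑ l, ‖z l‖ ^ 2) *
        Real.sqrt (∑ l, ‖y l‖ ^ 2) ^ (d - 1)) := by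
    rw [Real.sq_sqrt hQznn]; exact h2
  have ha0 : 0 < Real.sqrt (∑ l, ‖y l‖ ^ 2) := by
    apply Real.sqrt_pos.mpr
    obtain ⟨l, hl⟩ := Function.ne_iff.mp hy0
    have hl' : y l ≠ 0 := by simpa using hl
    exact Finset.sum_pos' (fun l _ => by positivity)
      ⟨l, Finset.mem_univ _, pow_pos (norm_pos_iff.mpr hl') 2⟩
  have hb0 : 0 ≤ Real.sqrt (∑ l, ‖z l‖ ^ 2) := Real.sqrt_nonneg _
  obtain ⟨m, rfl⟩ : ∃ m, d = m + 3 := ⟨d - 3, by omega⟩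
  simp only [show m + 3 - 1 = m + 2 from rfl] at h1' h2'
  simp only [show m + 3 - 2 = m + 1 from rfl]
  generalize hga : Real.sqrt (∑ l, ‖y l‖ ^ 2) = a at h1' h2' ha0 ⊢
  generalize hgb : Real.sqrt (∑ l, ‖z l‖ ^ 2) = b at h1' h2' hb0
  have hA : a ≤ M * b ^ (m + 2) := by nlinarith [h1', ha0]
  have hbpos : 0 < b := by
    rcases eq_or_lt_of_le hb0 with h | h
    · exfalso
      rw [← h] at hA
      rw [zero_pow (by omega : m + 2 ≠ 0), mul_zero] at hA
      linarith
    · exact h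
  have hB : b ≤ M * a ^ (m + 2) := by nlinarith [h2', hbpos]
  have h3 : b ^ (m + 2) ≤ (M * a ^ (m + 2)) ^ (m + 2) :=
    pow_le_pow_left₀ hbpos.le hB _
  have h4 : a ≤ M * (M * a ^ (m + 2)) ^ (m + 2) :=
    hA.trans (mul_le_mul_of_nonneg_left h3 hM0)
  have h5 : a ≤ (M * a ^ (m + 1)) ^ (m + 3) * a := by
    calc a ≤ M * (M * a ^ (m + 2)) ^ (m + 2) := h4
      _ = (M * a ^ (m + 1)) ^ (m + 3) * a := by ring
  have h6 : 1 ≤ (M * a ^ (m + 1)) ^ (m + 3) := by nlinarith [h5, ha0]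
  by_contra hcon
  push_neg at hcon
  have ht0 : 0 ≤ M * a ^ (m + 1) := mul_nonneg hM0 (by positivity)
  have := pow_lt_one₀ ht0 hcon (by omega : m + 3 ≠ 0)
  linarith
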